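/- Let A be a d × n real matrix, b ∈ ℝ^d and c ∈ ℝ^n, and suppose {x ∈ ℝ^n : A x ≤ b} is nonempty. Then the supremum of c^T x over {x : A x ≤ b} is finite and attained if and only if there exist x ∈ ℝ^n and y ∈ ℝ^d with A x ≤ b, y ≥ 0, A^T y = c, and b^T y ≤ c^T x. -/

import Mathlib

open Matrix Finset

section Cone

variable {E : Type*} [NormedAddCommGroup E] [InnerProductSpace ℝ E]

/-- Conic Carathéodory: any nonnegative combination can be rewritten with linearly
independent support. -/
lemma carath_cone {ι : Type*} [Fintype ι] (v : ι → E) (t : ι → ℝ) (ht : 0 ≤ t) :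
    ∃ t' : ι → ℝ, 0 ≤ t' ∧ ∑ i, t' i • v i = ∑ i, t i • v i ∧
      LinearIndependent ℝ (fun i : {i // t' i ≠ 0} => v (i : ι)) := by
  classical
  obtain ⟨k, hk⟩ : ∃ k, (Finset.univ.filter fun i => t i ≠ 0).card = k := ⟨_, rfl⟩
  induction k using Nat.strong_induction_on generalizing t with
  | _ k IH =>
  by_cases hli : LinearIndependent ℝ (fun i : {i // t i ≠ 0} => v (i : ι))
  · exact ⟨t, ht, rfl, hli⟩
  rw [Fintype.not_linearIndependent_iff] at hli
  obtain ⟨g, hg, j0, hj0⟩ := hli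
  -- sign normalization
  set s : ℝ := if 0 < g j0 then 1 else -1 with hs
  set r : ι → ℝ := fun i => if h : t i ≠ 0 then s * g ⟨i, h⟩ else 0 with hr
  have hr0 : ∀ i, t i = 0 → r i = 0 := by
    intro i hi; simp [hr, hi]
  have hrel : ∑ i, r i • v i = 0 := by
    have h1 : ∑ i, r i • v i = ∑ i ∈ Finset.univ.filter (fun i => t i ≠ 0), r i • v i := by
      refine (Finset.sum_filter_of_ne ?_).symm
      intro i _ h
      by_contra hti
      rw [hr0 i hti] at h
      simp at h
    have h2 : ∑ i ∈ Finset.univ.filter (fun i => t i ≠ 0), r i • v i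
        = ∑ i : {i // t i ≠ 0}, r (i : ι) • v (i : ι) := by
      refine Finset.sum_subtype _ (fun i => ?_) (fun i => r i • v i)
      simp
    have h3 : ∀ i : {i // t i ≠ 0}, r (i : ι) • v (i : ι) = s • (g i • v (i : ι)) := by
      rintro ⟨i, hi⟩
      simp only [hr, dif_pos hi, mul_smul]
    rw [h1, h2]
    simp only [h3, ← Finset.smul_sum, hg, smul_zero]
  have hrj0 : 0 < r (j0 : ι) := by
    have : r (j0 : ι) = s * g j0 := by
      simp only [hr, dif_pos j0.2]
    rcases lt_or_gt_of_ne hj0 with h | h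
    · rw [this, hs, if_neg (by linarith)]; linarith
    · rw [this, hs, if_pos h]; linarith
  -- the set of positive coefficients
  obtain ⟨i0, hi0P, hmin⟩ := Finset.exists_min_image
    (Finset.univ.filter fun i => 0 < r i) (fun i => t i / r i)
    ⟨(j0 : ι), by simp [hrj0]⟩
  have hri0 : 0 < r i0 := (Finset.mem_filter.mp hi0P).2
  set α : ℝ := t i0 / r i0 with hα
  have hα0 : 0 ≤ α := div_nonneg (ht i0) hri0.le
  set t' : ι → ℝ := fun i => t i - α * r i with ht'
  have ht'0 : 0 ≤ t' := by
    intro i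
    simp only [ht', Pi.zero_apply]
    rcases lt_or_ge 0 (r i) with h | h
    · have h1 := hmin i (by simp [h])
      have h2 : α * r i ≤ (t i / r i) * r i :=
        mul_le_mul_of_nonneg_right h1 h.le
      rw [div_mul_cancel₀ _ h.ne'] at h2
      linarith
    · have : α * r i ≤ 0 := mul_nonpos_of_nonneg_of_nonpos hα0 h
      have h3 : (0:ℝ) ≤ t i := ht i
      linarith
  have hsum' : ∑ i, t' i • v i = ∑ i, t i • v i := by
    simp only [ht', sub_smul, Finset.sum_sub_distrib, mul_smul, ← Finset.smul_sum, hrel,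
      smul_zero, sub_zero]
  have hsub : (Finset.univ.filter fun i => t' i ≠ 0) ⊂ (Finset.univ.filter fun i => t i ≠ 0) := by
    constructor
    · intro i hi
      simp only [Finset.mem_filter, Finset.mem_univ, true_and] at hi ⊢
      intro hti
      exact hi (by simp [ht', hti, hr0 i hti])
    · intro hcon
      have hi0 : i0 ∈ Finset.univ.filter fun i => t i ≠ 0 := by
        simp only [Finset.mem_filter, Finset.mem_univ, true_and]
        intro h0
        rw [hr0 i0 h0] at hri0; linarith
      have := hcon hi0
      simp only [Finset.mem_filter, Finset.mem_univ, true_and] at this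
      apply this
      simp only [ht', hα]
      field_simp
      ring
  have hcard : (Finset.univ.filter fun i => t' i ≠ 0).card < k := by
    rw [← hk]; exact Finset.card_lt_card hsub
  obtain ⟨t'', h1, h2, h3⟩ := IH _ hcard t' ht'0 rfl
  exact ⟨t'', h1, h2.trans hsum', h3⟩

/-- A finitely generated cone is closed. -/
lemma isClosed_finite_cone {ι : Type*} [Fintype ι] [FiniteDimensional ℝ E] (v : ι → E) :
    IsClosed {x : E | ∃ t : ι → ℝ, 0 ≤ t ∧ ∑ i, t i • v i = x} := by
  classical
  have key : {x : E | ∃ t : ι → ℝ, 0 ≤ t ∧ ∑ i, t i • v i = x} =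
      ⋃ (S : {S : Finset ι // LinearIndependent ℝ (fun i : ↥(S : Finset ι) => v (i : ι))}),
        (fun t : (↥(S : Finset ι) → ℝ) => ∑ i, t i • v (i : ι)) '' {t | 0 ≤ t} := by
    ext x
    simp only [Set.mem_setOf_eq, Set.mem_iUnion, Set.mem_image]
    constructor
    · rintro ⟨t, ht, rfl⟩
      obtain ⟨t', ht', hsum, hli⟩ := carath_cone v t ht
      set S : Finset ι := Finset.univ.filter (fun i => t' i ≠ 0) with hS
      have memS : ∀ i, i ∈ S ↔ t' i ≠ 0 := by simp [hS]
      refine ⟨⟨S, ?_⟩, fun i => t' (i : ι), fun i => ht' (i : ι), ?_⟩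
    -- linear independence transfer
      · exact hli.comp (Equiv.subtypeEquivRight memS) (Equiv.injective _)
      · rw [← hsum]
        calc ∑ i : ↥S, t' (i : ι) • v (i : ι) = ∑ i ∈ S, t' i • v i :=
              Finset.sum_coe_sort S (fun i => t' i • v i)
          _ = ∑ i, t' i • v i := by
              refine Finset.sum_filter_of_ne ?_
              intro i _ h
              intro h0; rw [h0] at h; simp at h
    · rintro ⟨S, t, ht, rfl⟩
      refine ⟨fun i => if h : i ∈ (S : Finset ι) then t ⟨i, h⟩ else 0, ?_, ?_⟩
      · intro i
        by_cases h : i ∈ (S : Finset ι) <;> simp [h]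
        exact ht _
      · have h1 : ∑ i : ι, (fun i => if h : i ∈ (S : Finset ι) then t ⟨i, h⟩ else 0) i • v i
            = ∑ i ∈ (S : Finset ι), (if h : i ∈ (S : Finset ι) then t ⟨i, h⟩ else 0) • v i :=
          (Finset.sum_subset (Finset.subset_univ _) (by intro i _ hi; simp [hi])).symm
        have h2 : ∑ i ∈ (S : Finset ι), (if h : i ∈ (S : Finset ι) then t ⟨i, h⟩ else 0) • v i
            = ∑ i : ↥(S : Finset ι), (if h : (i : ι) ∈ (S : Finset ι) then t ⟨i, h⟩ else 0) • v (i : ι) :=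
          (Finset.sum_coe_sort _ _).symm
        rw [h1, h2]
        exact Finset.sum_congr rfl (fun i _ => by simp [i.2])
  rw [key]
  refine isClosed_iUnion_of_finite (fun S => ?_)
  set L : (↥(S : Finset ι) → ℝ) →ₗ[ℝ] E := Fintype.linearCombination ℝ (fun i : ↥(S : Finset ι) => v (i : ι)) with hL
  have hfun : (fun t : (↥(S : Finset ι) → ℝ) => ∑ i, t i • v (i : ι)) = ⇑L := by
    ext t
    simp [hL, Fintype.linearCombination_apply]
  rw [hfun]
  have hker : LinearMap.ker L = ⊥ := by
    rw [LinearMap.ker_eq_bot']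
    intro m hm
    rw [hL] at hm
    simp only [Fintype.linearCombination_apply] at hm
    ext i
    exact Fintype.linearIndependent_iff.mp S.2 m hm i
  have hemb := LinearMap.isClosedEmbedding_of_injective hker
  refine hemb.isClosedMap _ ?_
  have : {t : (↥(S : Finset ι) → ℝ) | 0 ≤ t} = ⋂ i, (fun t => t i) ⁻¹' Set.Ici (0:ℝ) := by
    ext t; simp [Pi.le_def, Set.mem_iInter]
  rw [this]
  exact isClosed_iInter fun i => (isClosed_Ici).preimage (continuous_apply i)

end Cone

section Main

/-- Sum evaluation in `EuclideanSpace`. -/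
lemma esum_apply {κ ι : Type*} (s : Finset κ) (f : κ → EuclideanSpace ℝ ι) (j : ι) :
    (∑ k ∈ s, f k) j = ∑ k ∈ s, f k j := by
  classical
  induction s using Finset.cons_induction with
  | empty => simp
  | cons a s ha ih =>
    rw [Finset.sum_cons, Finset.sum_cons, ← ih]
    rfl

theorem stmt_11 (d n : ℕ) (A : Matrix (Fin d) (Fin n) ℝ) (b : Fin d → ℝ) (c : Fin n → ℝ)
    (hfeas : ∃ x : Fin n → ℝ, A.mulVec x ≤ b) :
    (∃ x : Fin n → ℝ, A.mulVec x ≤ b ∧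
        ∀ x' : Fin n → ℝ, A.mulVec x' ≤ b → c ⬝ᵥ x' ≤ c ⬝ᵥ x) ↔
      ∃ (x : Fin n → ℝ) (y : Fin d → ℝ), A.mulVec x ≤ b ∧ 0 ≤ y ∧
        Aᵀ.mulVec y = c ∧ b ⬝ᵥ y ≤ c ⬝ᵥ x := by
  classical
  constructor
  · rintro ⟨x, hx, hopt⟩
    refine ⟨x, ?_⟩
    set w : (Fin d ⊕ Unit) → EuclideanSpace ℝ (Fin n ⊕ Unit) := fun k =>
      Sum.elim (fun i => (WithLp.equiv 2 ((Fin n ⊕ Unit) → ℝ)).symm (Sum.elim (A i) (fun _ => b i))) (fun _ => (WithLp.equiv 2 ((Fin n ⊕ Unit) → ℝ)).symm (Sum.elim 0 (fun _ => 1))) k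
      with hw
    set v : ℝ := c ⬝ᵥ x with hv
    set cv : EuclideanSpace ℝ (Fin n ⊕ Unit) := (WithLp.equiv 2 ((Fin n ⊕ Unit) → ℝ)).symm (Sum.elim c (fun _ => v)) with hcv
    set C : Set (EuclideanSpace ℝ (Fin n ⊕ Unit)) := {z : EuclideanSpace ℝ (Fin n ⊕ Unit) | ∃ t : (Fin d ⊕ Unit) → ℝ, 0 ≤ t ∧ ∑ k, t k • w k = z} with hC
    set K : ConvexCone ℝ (EuclideanSpace ℝ (Fin n ⊕ Unit)) :=
      { carrier := C
        smul_mem' := by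
          rintro a ha z ⟨t, ht, rfl⟩
          refine ⟨a • t, fun k => mul_nonneg ha.le (ht k), ?_⟩
          rw [Finset.smul_sum]
          exact Finset.sum_congr rfl fun k _ => by
            simp [mul_smul]
        add_mem' := by
          rintro z ⟨t, ht, rfl⟩ z' ⟨t', ht', rfl⟩
          refine ⟨t + t', fun k => add_nonneg (ht k) (ht' k), ?_⟩
          rw [← Finset.sum_add_distrib]
          exact Finset.sum_congr rfl fun k _ => by simp [add_smul] } with hK
    have hKC : (K : Set (EuclideanSpace ℝ (Fin n ⊕ Unit))) = C := rfl
    have happ : ∀ (t : (Fin d ⊕ Unit) → ℝ) (j : Fin n ⊕ Unit),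
        (∑ k, t k • w k) j = ∑ k, t k * w k j := by
      intro t j
      rw [esum_apply]
      exact Finset.sum_congr rfl fun k _ => rfl
    -- membership of `cv` in the cone
    have hmem : cv ∈ K := by
      by_contra hnot
      obtain ⟨z, hz1, hz2⟩ : ∃ z, (∀ x ∈ K, 0 ≤ inner ℝ x z) ∧ inner ℝ z cv < 0 := by
        let P : ProperCone ℝ (EuclideanSpace ℝ (Fin n ⊕ Unit)) :=
          { carrier := C
            zero_mem' := ⟨0, le_refl 0, by simp⟩
            add_mem' := fun ha hb => K.add_mem' ha hb
            smul_mem' := by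
              rintro ⟨a, ha⟩ z ⟨t, ht, rfl⟩
              refine ⟨a • t, fun k => mul_nonneg ha (ht k), ?_⟩
              show ∑ k, (a • t) k • w k = a • ∑ k, t k • w k
              rw [Finset.smul_sum]
              exact Finset.sum_congr rfl fun k _ => by
                simp [mul_smul]
            isClosed' := by rw [hC]; exact isClosed_finite_cone w }
        obtain ⟨z, hz1, hz2⟩ := ProperCone.hyperplane_separation' P (x₀ := cv) hnot
        exact ⟨z, hz1, by rwa [real_inner_comm]⟩
      -- unpack z
      set u : Fin n → ℝ := fun j => z (Sum.inl j) with hu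
      set τ : ℝ := z (Sum.inr ()) with hτ
      have hgen : ∀ k, w k ∈ K := by
        intro k
        refine ⟨fun k' => if k' = k then 1 else 0, fun k' => by positivity, ?_⟩
        simp [Finset.sum_ite_eq']
      have hinner : ∀ g : (Fin n ⊕ Unit) → ℝ,
          (inner ℝ ((WithLp.equiv 2 ((Fin n ⊕ Unit) → ℝ)).symm g) z : ℝ) = (∑ j, g (Sum.inl j) * u j) + g (Sum.inr ()) * τ := by
        intro g
        rw [PiLp.inner_apply]
        simp only [RCLike.inner_apply, conj_trivial]
        rw [Fintype.sum_sum_type]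
        simp [hu, hτ, WithLp.equiv_symm_apply, WithLp.ofLp_toLp, PiLp.toLp_apply, mul_comm]
      have hA : ∀ i, 0 ≤ (∑ j, A i j * u j) + b i * τ := by
        intro i
        have h0 := hz1 _ (hgen (Sum.inl i))
        rw [show w (Sum.inl i) = (WithLp.equiv 2 ((Fin n ⊕ Unit) → ℝ)).symm (Sum.elim (A i) (fun _ => b i)) from rfl, hinner] at h0
        simpa using h0
      have hτ0 : 0 ≤ τ := by
        have h0 := hz1 _ (hgen (Sum.inr ()))
        rw [show w (Sum.inr ()) = (WithLp.equiv 2 ((Fin n ⊕ Unit) → ℝ)).symm (Sum.elim 0 (fun _ => 1)) from rfl, hinner] at h0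
        simpa using h0
      have hcvz : (∑ j, c j * u j) + v * τ < 0 := by
        rw [real_inner_comm] at hz2
        rw [show cv = (WithLp.equiv 2 ((Fin n ⊕ Unit) → ℝ)).symm (Sum.elim c (fun _ => v)) from rfl, hinner] at hz2
        simpa using hz2
      -- two cases on τ
      rcases eq_or_lt_of_le hτ0 with hτz | hτpos
      · -- τ = 0 : the problem is unbounded, contradiction
        obtain ⟨x₀, hx₀⟩ := hfeas
        have hcu : (∑ j, c j * u j) < 0 := by rw [← hτz] at hcvz; simpa using hcvz
        set s : ℝ := max 0 ((v - c ⬝ᵥ x₀ + 1) / (-(∑ j, c j * u j))) with hs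
        have hs0 : 0 ≤ s := le_max_left _ _
        set x' : Fin n → ℝ := fun j => x₀ j - s * u j with hx'
        have hfeas' : A.mulVec x' ≤ b := by
          intro i
          have h1 : (0:ℝ) ≤ ∑ j, A i j * u j := by
            have := hA i; rw [← hτz] at this; simpa using this
          have h2 : A.mulVec x' i = A.mulVec x₀ i - s * ∑ j, A i j * u j := by
            simp only [Matrix.mulVec, dotProduct, hx', mul_sub, Finset.sum_sub_distrib,
              Finset.mul_sum]
            congr 1
            exact Finset.sum_congr rfl fun j _ => by ring
          rw [h2]
          have := hx₀ i
          nlinarith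
        have hval : v < c ⬝ᵥ x' := by
          have h2 : c ⬝ᵥ x' = c ⬝ᵥ x₀ - s * ∑ j, c j * u j := by
            simp only [dotProduct, hx', mul_sub, Finset.sum_sub_distrib, Finset.mul_sum]
            congr 1
            exact Finset.sum_congr rfl fun j _ => by ring
          have h3 : (v - c ⬝ᵥ x₀ + 1) / (-(∑ j, c j * u j)) ≤ s := le_max_right _ _
          have h4 : (0:ℝ) < -(∑ j, c j * u j) := by linarith
          rw [div_le_iff₀ h4] at h3
          rw [h2]
          nlinarith
        exact absurd (hopt x' hfeas') (not_le.mpr hval)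
      · -- τ > 0 : get a better feasible point, contradiction
        set x' : Fin n → ℝ := fun j => -(u j) / τ with hx'
        have hfeas' : A.mulVec x' ≤ b := by
          intro i
          have h2 : A.mulVec x' i = -(∑ j, A i j * u j) / τ := by
            simp only [Matrix.mulVec, dotProduct, hx', Finset.sum_div, neg_div]
            rw [← Finset.sum_neg_distrib]
            exact Finset.sum_congr rfl fun j _ => by ring
          rw [h2, div_le_iff₀ hτpos]
          have := hA i
          nlinarith
        have hval : v < c ⬝ᵥ x' := by
          have h2 : c ⬝ᵥ x' = -(∑ j, c j * u j) / τ := by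
            simp only [dotProduct, hx', Finset.sum_div, neg_div]
            rw [← Finset.sum_neg_distrib]
            exact Finset.sum_congr rfl fun j _ => by ring
          rw [h2, lt_div_iff₀ hτpos]
          nlinarith
        exact absurd (hopt x' hfeas') (not_le.mpr hval)
    -- extract the dual certificate
    obtain ⟨t, ht, hsum⟩ := hmem
    set y : Fin d → ℝ := fun i => t (Sum.inl i) with hy
    set lam : ℝ := t (Sum.inr ()) with hlam
    have hcoord : ∀ j : Fin n ⊕ Unit, ∑ k, t k * w k j = (Sum.elim c (fun _ => v)) j := by
      intro j
      rw [← happ, hsum, hcv]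
      rfl
    refine ⟨y, hx, fun i => ht (Sum.inl i), ?_, ?_⟩
    · ext j
      have h0 := hcoord (Sum.inl j)
      rw [Fintype.sum_sum_type] at h0
      simp only [hw, Sum.elim_inl, Sum.elim_inr, WithLp.equiv_symm_apply, WithLp.ofLp_toLp, PiLp.toLp_apply,
        Pi.zero_apply, mul_zero, mul_one, Finset.sum_const_zero, add_zero,
        Finset.univ_unique, Finset.sum_singleton, zero_mul] at h0
      rw [← h0]
      simp only [Matrix.mulVec, dotProduct, Matrix.transpose_apply, hy]
      exact Finset.sum_congr rfl fun i _ => mul_comm _ _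
    · have h0 := hcoord (Sum.inr ())
      rw [Fintype.sum_sum_type] at h0
      simp only [hw, Sum.elim_inl, Sum.elim_inr, WithLp.equiv_symm_apply, WithLp.ofLp_toLp, PiLp.toLp_apply,
        Pi.zero_apply, mul_zero, mul_one, Finset.sum_const_zero, add_zero,
        Finset.univ_unique, Finset.sum_singleton, zero_mul] at h0
      have hbv : b ⬝ᵥ y = ∑ i, t (Sum.inl i) * b i := by
        simp only [dotProduct, hy]
        exact Finset.sum_congr rfl fun i _ => mul_comm _ _
      have hl : (0:ℝ) ≤ t (Sum.inr ()) := ht (Sum.inr ())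
      rw [hbv]
      linarith
  · rintro ⟨x, y, hx, hy, hAy, hby⟩
    refine ⟨x, hx, fun x' hx' => ?_⟩
    have h1 : c ⬝ᵥ x' = y ⬝ᵥ A.mulVec x' := by
      rw [← hAy, Matrix.mulVec_transpose, ← dotProduct_mulVec]
    have h2 : y ⬝ᵥ A.mulVec x' ≤ y ⬝ᵥ b := by
      refine Finset.sum_le_sum fun i _ => ?_
      exact mul_le_mul_of_nonneg_left (hx' i) (hy i)
    have h3 : y ⬝ᵥ b = b ⬝ᵥ y := dotProduct_comm y b
    linarith
  
end Main
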